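/- Let α ≥ −1/2 and α ≥ β > −1, let K ≥ 1 be an integer, and let t_{K,K} ≤ δ < 1. Let G : (δ,1) → [0,∞) be measurable with ∫_δ^1 G(t) ω_{α,β}(t) dt < ∞. Then for every k ∈ {0, 1, …, K}: ∫_δ^1 G(t) P_k^{(α,β)}(t)/P_k^{(α,β)}(1) ω_{α,β}(t) dt ≥ ∫_δ^1 G(t) P_K^{(α,β)}(t)/P_K^{(α,β)}(1) ω_{α,β}(t) dt ≥ 0. -/

import Mathlib

open MeasureTheory Real Filter

/-- Jacobi polynomials defined by the three-term recurrence. -/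
noncomputable def jacobiP (α β : ℝ) : ℕ → ℝ → ℝ
  | 0 => fun _ => 1
  | 1 => fun t => ((α + β + 2) * t + (α - β)) / 2
  | (n + 2) => fun t =>
      let m : ℝ := (n : ℝ) + 1
      let a := (2 * m + α + β) * (2 * m + α + β + 1) * (2 * m + α + β + 2)
      let b := (2 * m + α + β + 1) * (α ^ 2 - β ^ 2)
      let c := (m + α) * (m + β) * (2 * m + α + β + 2)
      let d := 2 * (m + 1) * (m + α + β + 1) * (2 * m + α + β)
      ((a / d) * t + b / d) * jacobiP α β (n + 1) t - (c / d) * jacobiP α β n t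

/-- The incomplete beta function. -/
noncomputable def incBeta (a b x : ℝ) : ℝ :=
  ∫ s in (0:ℝ)..x, s ^ (a - 1) * (1 - s) ^ (b - 1)

/-- The Bessel function of the first kind. -/
noncomputable def besselJ (α x : ℝ) : ℝ :=
  ∑' m : ℕ, ((-1 : ℝ) ^ m / (m.factorial * Real.Gamma (m + α + 1))) * (x / 2) ^ (2 * (m:ℝ) + α)

noncomputable def ja (α β : ℝ) (n : ℕ) : ℝ :=
  (2 * ((n:ℝ)+1) + α + β) * (2 * ((n:ℝ)+1) + α + β + 1) * (2 * ((n:ℝ)+1) + α + β + 2)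
noncomputable def jb (α β : ℝ) (n : ℕ) : ℝ := (2 * ((n:ℝ)+1) + α + β + 1) * (α ^ 2 - β ^ 2)
noncomputable def jc (α β : ℝ) (n : ℕ) : ℝ := (((n:ℝ)+1) + α) * (((n:ℝ)+1) + β) * (2 * ((n:ℝ)+1) + α + β + 2)
noncomputable def jd (α β : ℝ) (n : ℕ) : ℝ := 2 * (((n:ℝ)+1) + 1) * (((n:ℝ)+1) + α + β + 1) * (2 * ((n:ℝ)+1) + α + β)
lemma jacobiP_rec (α β : ℝ) (n : ℕ) (t : ℝ) :
    jacobiP α β (n+2) t =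
      ((ja α β n / jd α β n) * t + jb α β n / jd α β n) * jacobiP α β (n+1) t
        - (jc α β n / jd α β n) * jacobiP α β n t := rfl
lemma jacobiP_one_eq (α β : ℝ) (t : ℝ) : jacobiP α β 1 t = ((α + β + 2) * t + (α - β)) / 2 := rfl
lemma jacobiP_zero_eq (α β : ℝ) (t : ℝ) : jacobiP α β 0 t = 1 := rfl

section
variable {α β : ℝ} (hα : -1/2 ≤ α) (hβα : β ≤ α) (hβ : -1 < β)
include hα hβα hβ

lemma ja_pos (n : ℕ) : 0 < ja α β n := by
  have h : (0:ℝ) ≤ (n:ℝ) := n.cast_nonneg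
  unfold ja
  have h1 : 0 < 2 * ((n:ℝ)+1) + α + β := by linarith
  have h2 : 0 < 2 * ((n:ℝ)+1) + α + β + 1 := by linarith
  have h3 : 0 < 2 * ((n:ℝ)+1) + α + β + 2 := by linarith
  positivity

lemma jc_pos (n : ℕ) : 0 < jc α β n := by
  have h : (0:ℝ) ≤ (n:ℝ) := n.cast_nonneg
  unfold jc
  have h1 : 0 < ((n:ℝ)+1) + α := by linarith
  have h2 : 0 < ((n:ℝ)+1) + β := by linarith
  have h3 : 0 < 2 * ((n:ℝ)+1) + α + β + 2 := by linarith
  positivity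

lemma jd_pos (n : ℕ) : 0 < jd α β n := by
  have h : (0:ℝ) ≤ (n:ℝ) := n.cast_nonneg
  unfold jd
  have h1 : 0 < ((n:ℝ)+1) + 1 := by linarith
  have h2 : 0 < ((n:ℝ)+1) + α + β + 1 := by linarith
  have h3 : 0 < 2 * ((n:ℝ)+1) + α + β := by linarith
  positivity

lemma jid (n : ℕ) :
    (ja α β n + jb α β n) * (((n:ℝ)+1) + α) * (((n:ℝ)+1) + 1)
      = jd α β n * (((n:ℝ)+1) + 1 + α) * (((n:ℝ)+1) + α)
        + 2 * jc α β n * ((n:ℝ)+1) * (((n:ℝ)+1) + 1) := by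
  unfold ja jb jc jd; ring

lemma jacobiP_cont (n : ℕ) : Continuous (jacobiP α β n) := by
  have H : ∀ n, Continuous (jacobiP α β n) ∧ Continuous (jacobiP α β (n+1)) := by
    intro n
    induction n with
    | zero =>
      constructor
      · show Continuous fun _ : ℝ => (1:ℝ); exact continuous_const
      · show Continuous fun t : ℝ => ((α + β + 2) * t + (α - β)) / 2; fun_prop
    | succ n ih =>
      refine ⟨ih.2, ?_⟩
      have e : jacobiP α β (n+2) = fun t =>
          ((ja α β n / jd α β n) * t + jb α β n / jd α β n) * jacobiP α β (n+1) t
            - (jc α β n / jd α β n) * jacobiP α β n t := funext (jacobiP_rec α β n)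
      rw [e]
      have h1 := ih.1
      have h2 := ih.2
      fun_prop
  exact (H n).1

lemma jacobiP_one_pos : ∀ n : ℕ, 0 < jacobiP α β n 1 ∧
    (((n:ℝ)+1) + α) * jacobiP α β n 1 ≤ ((n:ℝ)+1) * jacobiP α β (n+1) 1 := by
  intro n
  induction n with
  | zero =>
    rw [jacobiP_zero_eq, jacobiP_one_eq]
    constructor
    · norm_num
    · push_cast
      have : ((α + β + 2) * 1 + (α - β)) / 2 = α + 1 := by ring
      rw [this]; linarith
  | succ n ih =>
    obtain ⟨hq0, he⟩ := ih
    have hm : (0:ℝ) ≤ (n:ℝ) := n.cast_nonneg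
    set m : ℝ := (n:ℝ) + 1 with hmdef
    have hm1 : (1:ℝ) ≤ m := by simp [hmdef]
    have hma : 0 < m + α := by linarith
    have hq1 : 0 < jacobiP α β (n+1) 1 := by nlinarith
    have hd := jd_pos hα hβα hβ n
    have hc := jc_pos hα hβα hβ n
    refine ⟨hq1, ?_⟩
    have hrec := jacobiP_rec α β n 1
    have hq2d : jd α β n * jacobiP α β (n+2) 1
        = (ja α β n + jb α β n) * jacobiP α β (n+1) 1 - jc α β n * jacobiP α β n 1 := by
      rw [hrec]; field_simp
    have hid := jid hα hβα hβ n
    -- goal : (↑(n+1)+1+α) * q1 ≤ (↑(n+1)+1) * q2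
    have key : ((m + 1 + α) * jacobiP α β (n+1) 1) * (jd α β n * (m + α))
        ≤ ((m + 1) * jacobiP α β (n+2) 1) * (jd α β n * (m + α)) := by
      have he' : (jc α β n * (m+1)) * ((m + α) * jacobiP α β n 1)
          ≤ (jc α β n * (m+1)) * (m * jacobiP α β (n+1) 1) :=
        mul_le_mul_of_nonneg_left he (by positivity)
      have hid1 : (ja α β n + jb α β n) * (m + α) * (m + 1) * jacobiP α β (n+1) 1
          = (jd α β n * (m + 1 + α) * (m + α)
              + 2 * jc α β n * m * (m + 1)) * jacobiP α β (n+1) 1 := by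
        rw [hid]
      have hP2 : 0 ≤ jc α β n * m * (m+1) * jacobiP α β (n+1) 1 := by positivity
      have hq2d' := congrArg (fun x => x * ((m+1)*(m+α))) hq2d
      linarith [hq2d', hid1, he', hP2]
    have key2 := le_of_mul_le_mul_right key (by positivity : 0 < jd α β n * (m + α))
    rw [hmdef] at key2
    push_cast
    linarith [key2]
  
lemma pos_chain : ∀ n : ℕ, ∃ x : ℝ, x < 1 ∧ jacobiP α β (n+1) x = 0 ∧
    (∀ t, x < t → t ≤ 1 → 0 < jacobiP α β (n+1) t) ∧
    (∀ i, i ≤ n → ∀ t, x ≤ t → t ≤ 1 → 0 < jacobiP α β i t) := by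
  intro n
  induction n with
  | zero =>
    have hs : 0 < α + β + 2 := by linarith
    refine ⟨(β - α)/(α + β + 2), ?_, ?_, ?_, ?_⟩
    · rw [div_lt_one hs]; linarith
    · rw [jacobiP_one_eq]; field_simp; ring
    · intro t ht _
      rw [jacobiP_one_eq]
      rw [div_lt_iff₀ hs] at ht
      linarith
    · intro i hi t _ _
      have : i = 0 := Nat.le_zero.mp hi
      subst this
      rw [jacobiP_zero_eq]; norm_num
  | succ n ih =>
    obtain ⟨x, hx1, hx0, hxpos, hxprev⟩ := ih
    have hcont : Continuous (jacobiP α β (n+2)) := jacobiP_cont hα hβα hβ (n+2)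
    have hc := jc_pos hα hβα hβ n
    have hd := jd_pos hα hβα hβ n
    have hfx : jacobiP α β (n+2) x < 0 := by
      rw [jacobiP_rec, hx0, mul_zero]
      have h0 : 0 < jacobiP α β n x := hxprev n le_rfl x le_rfl hx1.le
      have hcd : 0 < jc α β n / jd α β n := div_pos hc hd
      nlinarith
    have hf1 : 0 < jacobiP α β (n+2) 1 := (jacobiP_one_pos hα hβα hβ (n+2)).1
    have hIVT := intermediate_value_Ioo hx1.le (hcont.continuousOn (s := Set.Icc x 1))
    obtain ⟨z, hz, hz0⟩ := hIVT (⟨hfx, hf1⟩ : (0:ℝ) ∈ Set.Ioo _ _)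
    set S := {t : ℝ | jacobiP α β (n+2) t = 0} ∩ Set.Icc x 1 with hS
    have hSc : IsCompact S := (isCompact_Icc).inter_left (isClosed_eq hcont continuous_const)
    have hSne : S.Nonempty := ⟨z, hz0, ⟨hz.1.le, hz.2.le⟩⟩
    have hymem := hSc.sSup_mem hSne
    set y := sSup S with hy
    obtain ⟨hy0, hyx, hy1⟩ := hymem
    have hzy : z ≤ y := le_csSup hSc.bddAbove ⟨hz0, hz.1.le, hz.2.le⟩
    have hxy : x < y := lt_of_lt_of_le hz.1 hzy
    have hylt1 : y < 1 := lt_of_le_of_ne hy1 (fun h => by rw [h] at hy0; exact hf1.ne' hy0)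
    refine ⟨y, hylt1, hy0, ?_, ?_⟩
    · intro t hyt ht1
      by_contra hle
      push_neg at hle
      rcases lt_or_eq_of_le hle with hlt | heq
      · have ht1' : t < 1 := lt_of_le_of_ne ht1 (fun h => by rw [h] at hlt; linarith)
        have hIVT2 := intermediate_value_Ioo ht1'.le (hcont.continuousOn (s := Set.Icc t 1))
        obtain ⟨w, hw, hw0⟩ := hIVT2 (⟨hlt, hf1⟩ : (0:ℝ) ∈ Set.Ioo _ _)
        have hwy : w ≤ y :=
          le_csSup hSc.bddAbove ⟨hw0, (hyx.trans hyt.le).trans hw.1.le, hw.2.le⟩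
        linarith [hw.1]
      · have hty : t ≤ y :=
          le_csSup hSc.bddAbove ⟨heq, (hyx.trans_lt hyt).le, ht1⟩
        linarith
    · intro i hi t hyt ht1
      rcases Nat.lt_or_ge i (n+1) with h | h
      · exact hxprev i (by omega) t (hxy.le.trans hyt) ht1
      · have hieq : i = n+1 := by omega
        subst hieq
        exact hxpos t (lt_of_lt_of_le hxy hyt) ht1
end

/-- Key inequality in the proof of Theorem 4.2: for nonnegative `G` on `(δ,1)` with
`∫_δ^1 G ω_{α,β} < ∞` and `t_{K,K} ≤ δ < 1`, for all `0 ≤ k ≤ K`,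
`∫_δ^1 G P_k/P_k(1) ω ≥ ∫_δ^1 G P_K/P_K(1) ω ≥ 0`. -/
theorem jacobi_weighted_ordering (α β : ℝ) (hα : -1/2 ≤ α) (hβα : β ≤ α) (hβ : -1 < β)
    (K : ℕ) (hK : 1 ≤ K) (tKK : ℝ)
    (hzero : jacobiP α β K tKK = 0)
    (hmax : ∀ t : ℝ, jacobiP α β K t = 0 → t ≤ tKK)
    (δ : ℝ) (hδ : tKK ≤ δ) (hδ1 : δ < 1)
    (G : ℝ → ℝ) (hGmeas : Measurable G)
    (hGnonneg : ∀ t ∈ Set.Ioo δ 1, 0 ≤ G t)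
    (hGint : IntervalIntegrable (fun t => G t * ((1 - t) ^ α * (1 + t) ^ β)) volume δ 1)
    (k : ℕ) (hk : k ≤ K) :
    (∫ t in δ..1, G t * (jacobiP α β k t / jacobiP α β k 1) *
        ((1 - t) ^ α * (1 + t) ^ β)) ≥
      (∫ t in δ..1, G t * (jacobiP α β K t / jacobiP α β K 1) *
        ((1 - t) ^ α * (1 + t) ^ β)) ∧
    (∫ t in δ..1, G t * (jacobiP α β K t / jacobiP α β K 1) *
        ((1 - t) ^ α * (1 + t) ^ β)) ≥ 0 := by
  obtain ⟨n, rfl⟩ : ∃ n, K = n + 1 := ⟨K - 1, by omega⟩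
  obtain ⟨x, hx1, hx0, hxpos, hxprev⟩ := pos_chain hα hβα hβ n
  have hxt : x ≤ tKK := hmax x hx0
  have posAll : ∀ j, j ≤ n + 1 → ∀ t, δ < t → t ≤ 1 → 0 < jacobiP α β j t := by
    intro j hj t ht ht1
    have hxlt : x < t := lt_of_le_of_lt (hxt.trans hδ) ht
    rcases Nat.lt_or_ge j (n+1) with h | h
    · exact hxprev j (by omega) t hxlt.le ht1
    · have hjeq : j = n + 1 := by omega
      subst hjeq; exact hxpos t hxlt ht1
  have hδ1' : δ ≤ 1 := hδ1.le
  have hneg1 : ∀ t, δ < t → t ≤ 1 → -1 < t := by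
    intro t ht ht1
    have h1 := posAll 1 (by omega) t ht ht1
    rw [jacobiP_one_eq] at h1
    nlinarith
  have hone : ∀ j, 0 < jacobiP α β j 1 := fun j => (jacobiP_one_pos hα hβα hβ j).1
  have chain : ∀ m : ℕ, m + 1 ≤ n + 1 → ∀ t, δ < t → t < 1 →
      jacobiP α β (m+1) t * jacobiP α β m 1 ≤ jacobiP α β m t * jacobiP α β (m+1) 1 := by
    intro m
    induction m with
    | zero =>
      intro _ t ht ht1
      rw [jacobiP_zero_eq, jacobiP_zero_eq, jacobiP_one_eq, jacobiP_one_eq]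
      have hs : 0 < α + β + 2 := by linarith
      nlinarith
    | succ m ihm =>
      intro hm t ht ht1
      have IH := ihm (by omega) t ht ht1
      have hft : 0 < jacobiP α β (m+1) t := posAll (m+1) (by omega) t ht ht1.le
      have hp1 : 0 < jacobiP α β (m+1) 1 := hone (m+1)
      have hA : 0 < ja α β m / jd α β m := div_pos (ja_pos hα hβα hβ m) (jd_pos hα hβα hβ m)
      have hC : 0 < jc α β m / jd α β m := div_pos (jc_pos hα hβα hβ m) (jd_pos hα hβα hβ m)
      rw [jacobiP_rec α β m t, jacobiP_rec α β m 1]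
      nlinarith [mul_pos (mul_pos hA (by linarith : (0:ℝ) < 1 - t)) (mul_pos hft hp1),
        mul_nonneg hC.le (sub_nonneg.2 IH)]
  have ratio : ∀ t, δ < t → t < 1 →
      jacobiP α β (n+1) t / jacobiP α β (n+1) 1 ≤ jacobiP α β k t / jacobiP α β k 1 := by
    intro t ht ht1
    have H : ∀ j, k ≤ j → j ≤ n + 1 →
        jacobiP α β j t / jacobiP α β j 1 ≤ jacobiP α β k t / jacobiP α β k 1 := by
      intro j hkj
      induction j, hkj using Nat.le_induction with
      | base => intro _; exact le_rfl
      | succ j hkj ihj =>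
        intro hj1
        have h1 := ihj (by omega)
        have h2 : jacobiP α β (j+1) t / jacobiP α β (j+1) 1
            ≤ jacobiP α β j t / jacobiP α β j 1 := by
          rw [div_le_div_iff₀ (hone (j+1)) (hone j)]
          exact chain j hj1 t ht ht1
        exact h2.trans h1
    exact H (n+1) hk le_rfl
  have hIcc_ae : ∀ᵐ t ∂(volume.restrict (Set.Icc δ 1)), t ∈ Set.Ioo δ 1 := by
    rw [ae_restrict_iff' measurableSet_Icc]
    have h2 : (volume : Measure ℝ) {δ, 1} = 0 := Set.Finite.measure_zero (Set.toFinite _) volume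
    refine ((measure_eq_zero_iff_ae_notMem).1 h2).mono ?_
    intro t ht hmem
    simp only [Set.mem_insert_iff, Set.mem_singleton_iff] at ht
    push_neg at ht
    exact ⟨lt_of_le_of_ne hmem.1 (Ne.symm ht.1), lt_of_le_of_ne hmem.2 ht.2⟩
  have hWnn : ∀ t ∈ Set.Ioo δ 1, (0:ℝ) ≤ (1 - t) ^ α * (1 + t) ^ β := fun t ht =>
    mul_nonneg (rpow_nonneg (by linarith [ht.2] : (0:ℝ) ≤ 1 - t) α)
      (rpow_nonneg (by linarith [hneg1 t ht.1 ht.2.le] : (0:ℝ) ≤ 1 + t) β)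
  have hInt : ∀ j, IntervalIntegrable
      (fun t => G t * (jacobiP α β j t / jacobiP α β j 1) * ((1 - t) ^ α * (1 + t) ^ β))
      volume δ 1 := by
    intro j
    have hcj : ContinuousOn (fun t => jacobiP α β j t / jacobiP α β j 1) (Set.uIcc δ 1) :=
      ((jacobiP_cont hα hβα hβ j).div_const _).continuousOn
    have h := hGint.mul_continuousOn hcj
    have heq : (fun t => G t * ((1 - t) ^ α * (1 + t) ^ β) * (jacobiP α β j t / jacobiP α β j 1))
        = fun t => G t * (jacobiP α β j t / jacobiP α β j 1) * ((1 - t) ^ α * (1 + t) ^ β) := by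
      funext t; ring
    rwa [heq] at h
  constructor
  · refine intervalIntegral.integral_mono_ae_restrict hδ1' (hInt (n+1)) (hInt k) ?_
    filter_upwards [hIcc_ae] with t ht
    exact mul_le_mul_of_nonneg_right
      (mul_le_mul_of_nonneg_left (ratio t ht.1 ht.2) (hGnonneg t ht)) (hWnn t ht)
  · refine intervalIntegral.integral_nonneg_of_ae_restrict hδ1' ?_
    filter_upwards [hIcc_ae] with t ht
    have hRpos : 0 ≤ jacobiP α β (n+1) t / jacobiP α β (n+1) 1 :=
      div_nonneg (posAll (n+1) le_rfl t ht.1 ht.2.le).le (hone (n+1)).le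
    exact mul_nonneg (mul_nonneg (hGnonneg t ht) hRpos) (hWnn t ht)
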